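/- Let G be a further subspace of X and define K^c := {v ∈ M_1 × ⋯ × M_k : dim Q(v) = h + k}. If there exists a tuple v* ∈ K^c with G ⊄ Q(v*), then the set {v ∈ K^c : G ⊆ Q(v)} is a null set with respect to the product of additive Haar measures on M_1 × ⋯ × M_k. -/

import Mathlib

open MeasureTheory MvPolynomial Matrix

/-- The zero set of a nonzero multivariate polynomial is Lebesgue-null. -/

theorem mvpoly_null : ∀ (d : ℕ) (p : MvPolynomial (Fin d) ℝ), p ≠ 0 →
    (volume : Measure (Fin d → ℝ)) {x | eval x p = 0} = 0 := by
  intro d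
  induction d with
  | zero =>
    intro p hp
    convert measure_empty
    · ext x
      simp only [Set.mem_setOf_eq, Set.mem_empty_iff_false, iff_false]
      intro h
      apply hp
      apply MvPolynomial.funext
      intro y
      have : y = x := Subsingleton.elim _ _
      simpa [this] using h
    · infer_instance
  | succ d IH =>
    intro p hp
    set q := finSuccEquiv ℝ d p with hq
    have hq0 : q ≠ 0 := by
      simp only [hq, ne_eq, EmbeddingLike.map_eq_zero_iff]
      exact hp
    set c := q.leadingCoeff with hc
    have hc0 : c ≠ 0 := Polynomial.leadingCoeff_ne_zero.mpr hq0
    -- the bad set of parameters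
    have hN : (volume : Measure (Fin d → ℝ)) {s | eval s c = 0} = 0 := IH c hc0
    -- measurable equiv
    have hmp := measurePreserving_piFinSuccAbove (fun _ : Fin (d+1) => (volume : Measure ℝ)) 0
    set e := MeasurableEquiv.piFinSuccAbove (fun _ : Fin (d+1) => ℝ) 0 with he
    have hTmeas : MeasurableSet {x : Fin (d+1) → ℝ | eval x p = 0} :=
      (isClosed_singleton.preimage (MvPolynomial.continuous_eval p)).measurableSet
    have key : (volume : Measure (Fin (d+1) → ℝ)) {x | eval x p = 0}
        = ((volume : Measure ℝ).prod (Measure.pi fun _ : Fin d => (volume : Measure ℝ)))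
          (e.symm ⁻¹' {x | eval x p = 0}) := by
      have hS : MeasurableSet (e.symm ⁻¹' {x : Fin (d+1) → ℝ | eval x p = 0}) :=
        hTmeas.preimage e.symm.measurable
      rw [← hmp.measure_preimage hS.nullMeasurableSet]
      have h2 : ⇑e ⁻¹' (⇑e.symm ⁻¹' {x : Fin (d+1) → ℝ | eval x p = 0})
          = {x : Fin (d+1) → ℝ | eval x p = 0} := by ext x; simp
      rw [h2, MeasureTheory.volume_pi]
    rw [key]
    have hS : MeasurableSet (e.symm ⁻¹' {x : Fin (d+1) → ℝ | eval x p = 0}) :=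
      hTmeas.preimage e.symm.measurable
    rw [Measure.prod_apply_symm hS]
    have hae : ∀ᵐ s ∂(Measure.pi fun _ : Fin d => (volume : Measure ℝ)),
        (volume : Measure ℝ) ((fun a => (a, s)) ⁻¹' (e.symm ⁻¹' {x | eval x p = 0})) = 0 := by
      rw [← MeasureTheory.volume_pi]
      filter_upwards [(measure_eq_zero_iff_ae_notMem.mp hN)] with s hs
      have hsec : ((fun a => (a, s)) ⁻¹' (e.symm ⁻¹' {x | eval x p = 0}))
          = {a : ℝ | Polynomial.IsRoot (Polynomial.map (eval s) q) a} := by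
        ext a
        simp only [Set.mem_preimage, Set.mem_setOf_eq, he,
          MeasurableEquiv.piFinSuccAbove_symm_apply]
        rw [show ((Fin.insertNthEquiv (fun _ => ℝ) 0) (a, s)) = Fin.cons a s by
          simp [Fin.insertNthEquiv, Fin.insertNth_zero']]
        rw [eval_eq_eval_mv_eval']
        rfl
      rw [hsec]
      apply Set.Finite.measure_zero
      apply Polynomial.finite_setOf_isRoot
      intro hcontra
      apply hs
      have : (Polynomial.map (eval s) q).coeff q.natDegree = 0 := by rw [hcontra]; simp
      rw [Polynomial.coeff_map] at this
      exact this
    calc ∫⁻ s, (volume : Measure ℝ) ((fun a => (a, s)) ⁻¹' (e.symm ⁻¹' {x | eval x p = 0}))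
          ∂(Measure.pi fun _ : Fin d => (volume : Measure ℝ))
        = ∫⁻ _, 0 ∂(Measure.pi fun _ : Fin d => (volume : Measure ℝ)) :=
          lintegral_congr_ae hae
      _ = 0 := lintegral_zero

/-- The Gram determinant of a finite family of vectors in `ℝ^n` is nonzero iff the family is
linearly independent. -/

theorem gram_det_ne_zero_iff {ι : Type*} [Fintype ι] [DecidableEq ι] {n : ℕ}
    (u : ι → (Fin n → ℝ)) :
    (Matrix.of fun a b => ∑ i, u a i * u b i).det ≠ 0 ↔ LinearIndependent ℝ u := by
  set A : Matrix ι (Fin n) ℝ := Matrix.of u with hA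
  have hG : (Matrix.of fun a b => ∑ i, u a i * u b i) = A * Aᵀ := by
    ext a b
    simp [Matrix.mul_apply, hA, Matrix.transpose_apply]
  rw [hG]
  constructor
  · intro hdet
    rw [Fintype.linearIndependent_iff]
    intro c hc
    have hvm : c ᵥ* A = 0 := by
      funext i
      have := congrFun hc i
      simpa [Matrix.vecMul, dotProduct, hA, Finset.sum_apply, Pi.smul_apply,
        smul_eq_mul] using this
    intro i
    by_contra hne
    apply hdet
    rw [← Matrix.exists_vecMul_eq_zero_iff]
    exact ⟨c, fun h0 => hne (by rw [h0]; rfl),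
      by rw [← Matrix.vecMul_vecMul, hvm, Matrix.zero_vecMul]⟩
  · intro hli hdet
    obtain ⟨c, hc0, hcv⟩ := Matrix.exists_mulVec_eq_zero_iff.mpr hdet
    have hw : (Aᵀ *ᵥ c) ⬝ᵥ (Aᵀ *ᵥ c) = 0 := by
      have h1 : c ⬝ᵥ ((A * Aᵀ) *ᵥ c) = 0 := by rw [hcv, dotProduct_zero]
      rw [← Matrix.mulVec_mulVec, Matrix.dotProduct_mulVec, Matrix.mulVec_transpose] at h1
      rw [Matrix.mulVec_transpose]
      exact h1
    have hw0 : Aᵀ *ᵥ c = 0 := dotProduct_self_eq_zero.mp hw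
    apply hc0
    rw [Fintype.linearIndependent_iff] at hli
    have : ∑ a, c a • u a = 0 := by
      funext i
      have := congrFun hw0 i
      simpa [Matrix.mulVec, dotProduct, hA, Matrix.transpose_apply,
        Finset.sum_apply, Pi.smul_apply, smul_eq_mul, mul_comm] using this
    funext a
    exact hli c this a

/-- Proposition fact:Lor2: if some tuple in `K^c` has `G ⊄ Q(v)`, then the tuples in `K^c`
with `G ⊆ Q(v)` form a null set with respect to the product of additive Haar measures on
`M_1 × ⋯ × M_k`. -/
theorem containing_tuples_null
    (n k : ℕ) (hk : 1 ≤ k) (W G : Submodule ℝ (Fin n → ℝ))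
    (M : Fin k → Submodule ℝ (Fin n → ℝ)) (hM : ∀ j, M j ≠ ⊥)
    (ν : (j : Fin k) → Measure ↥(M j))
    [∀ j, (ν j).IsAddHaarMeasure] [∀ j, SigmaFinite (ν j)]
    (hex : ∃ v : (j : Fin k) → ↥(M j),
      Module.finrank ℝ
          ↥(W ⊔ Submodule.span ℝ (Set.range fun j => (v j : Fin n → ℝ))) =
        Module.finrank ℝ ↥W + k ∧
      ¬ G ≤ W ⊔ Submodule.span ℝ (Set.range fun j => (v j : Fin n → ℝ))) :
    Measure.pi ν {v : (j : Fin k) → ↥(M j) |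
      Module.finrank ℝ
          ↥(W ⊔ Submodule.span ℝ (Set.range fun j => (v j : Fin n → ℝ))) =
        Module.finrank ℝ ↥W + k ∧
      G ≤ W ⊔ Submodule.span ℝ (Set.range fun j => (v j : Fin n → ℝ))} = 0 := by
  classical
  obtain ⟨v₀, hv₀rank, hv₀G⟩ := hex
  obtain ⟨g, hgG, hgQ⟩ := SetLike.not_le_iff_exists.mp hv₀G
  set h := Module.finrank ℝ ↥W with hh
  let b : Module.Basis (Fin h) ℝ ↥W := Module.finBasis ℝ ↥W
  -- the family of vectors
  let u : Option (Fin h ⊕ Fin k) → ((j : Fin k) → ↥(M j)) → (Fin n → ℝ) :=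
    fun a v => a.elim g (Sum.elim (fun i => ((b i : ↥W) : Fin n → ℝ))
      (fun j => ((v j : Fin n → ℝ))))
  let F : ((j : Fin k) → ↥(M j)) → ℝ :=
    fun v => (Matrix.of fun a c => ∑ i, u a v i * u c v i).det
  have hspanW : Submodule.span ℝ (Set.range fun i => ((b i : ↥W) : Fin n → ℝ)) = W := by
    have h1 : (Set.range fun i => ((b i : ↥W) : Fin n → ℝ)) = W.subtype '' (Set.range b) := by
      rw [← Set.range_comp]; rfl
    rw [h1, ← Submodule.map_span, b.span_eq, Submodule.map_top, Submodule.range_subtype]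
  -- F vanishes on the bad set
  have hSsub : {v : (j : Fin k) → ↥(M j) |
      Module.finrank ℝ
          ↥(W ⊔ Submodule.span ℝ (Set.range fun j => (v j : Fin n → ℝ))) =
        Module.finrank ℝ ↥W + k ∧
      G ≤ W ⊔ Submodule.span ℝ (Set.range fun j => (v j : Fin n → ℝ))} ⊆ {v | F v = 0} := by
    rintro v ⟨hrank, hG⟩
    by_contra hF
    have hli : LinearIndependent ℝ (fun a => u a v) := (gram_det_ne_zero_iff _).mp hF
    set Q := W ⊔ Submodule.span ℝ (Set.range fun j => (v j : Fin n → ℝ)) with hQ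
    have hmem : ∀ a, u a v ∈ Q := by
      rintro (_ | i | j)
      · exact hG hgG
      · exact le_sup_left (α := Submodule ℝ (Fin n → ℝ)) (b i).2
      · exact le_sup_right (α := Submodule ℝ (Fin n → ℝ))
          (Submodule.subset_span ⟨j, rfl⟩)
    let u' : Option (Fin h ⊕ Fin k) → ↥Q := fun a => ⟨u a v, hmem a⟩
    have hli' : LinearIndependent ℝ u' := by
      apply LinearIndependent.of_comp Q.subtype
      exact hli
    have hcard := hli'.fintype_card_le_finrank
    rw [hrank] at hcard
    simp [Fintype.card_option, Fintype.card_sum] at hcard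
    rw [← hh] at hcard
    exact lt_irrefl _ hcard
  -- F does not vanish at v₀
  have hF₀ : F v₀ ≠ 0 := by
    rw [gram_det_ne_zero_iff]
    rw [linearIndependent_option]
    constructor
    · -- the w's and v₀'s are independent
      rw [linearIndependent_iff_card_eq_finrank_span]
      have hr : Set.range ((fun a => u a v₀) ∘ (some : (Fin h ⊕ Fin k) → _))
          = (Set.range fun i => ((b i : ↥W) : Fin n → ℝ))
            ∪ (Set.range fun j => ((v₀ j : Fin n → ℝ))) := by
        rw [show ((fun a => u a v₀) ∘ some) = Sum.elim (fun i => ((b i : ↥W) : Fin n → ℝ))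
          (fun j => ((v₀ j : Fin n → ℝ))) from rfl, Set.Sum.elim_range _ _]
      rw [Set.finrank, hr, Submodule.span_union, hspanW]
      simp only [Fintype.card_sum, Fintype.card_fin]
      exact hv₀rank.symm
    · -- g is not in the span
      have hr : Submodule.span ℝ (Set.range ((fun a => u a v₀) ∘ (some : (Fin h ⊕ Fin k) → _)))
          = W ⊔ Submodule.span ℝ (Set.range fun j => ((v₀ j : Fin n → ℝ))) := by
        rw [show ((fun a => u a v₀) ∘ some) = Sum.elim (fun i => ((b i : ↥W) : Fin n → ℝ))
          (fun j => ((v₀ j : Fin n → ℝ))) from rfl, Set.Sum.elim_range _ _,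
          Submodule.span_union, hspanW]
      show g ∉ _
      rw [hr]
      exact hgQ
  -- continuity of F
  have hcoord : ∀ (a : Option (Fin h ⊕ Fin k)) (i : Fin n),
      Continuous fun v : (j : Fin k) → ↥(M j) => u a v i := by
    rintro (_ | t | j) i
    · exact continuous_const
    · exact continuous_const
    · exact (continuous_apply i).comp (continuous_subtype_val.comp (continuous_apply j))
  have hFcont : Continuous F := by
    apply Continuous.matrix_det
    apply continuous_matrix
    intro a c
    simp only [Matrix.of_apply]
    exact continuous_finset_sum _ fun i _ => (hcoord a i).mul (hcoord c i)
  have hZmeas : MeasurableSet {v : (j : Fin k) → ↥(M j) | F v = 0} :=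
    (isClosed_singleton.preimage hFcont).measurableSet
  -- the linear equivalence with a Euclidean model
  set D := Module.finrank ℝ ((j : Fin k) → ↥(M j)) with hD
  let L : (Fin D → ℝ) ≃L[ℝ] ((j : Fin k) → ↥(M j)) :=
    ContinuousLinearEquiv.ofFinrankEq (Module.finrank_fin_fun ℝ)
  -- the polynomial representing F ∘ L
  let ent : Option (Fin h ⊕ Fin k) → Fin n → MvPolynomial (Fin D) ℝ :=
    fun a i => a.elim (C (g i)) (Sum.elim
      (fun t => C (((b t : ↥W) : Fin n → ℝ) i))
      (fun j => ∑ t, C ((((L (Pi.single t 1)) j : ↥(M j)) : Fin n → ℝ) i) * X t))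
  let P : MvPolynomial (Fin D) ℝ :=
    (Matrix.of fun a c => ∑ i, ent a i * ent c i).det
  have hent : ∀ (x : Fin D → ℝ) (a : Option (Fin h ⊕ Fin k)) (i : Fin n),
      eval x (ent a i) = u a (L x) i := by
    intro x a i
    rcases a with _ | t | j
    · simp [ent, u]
    · simp [ent, u]
    · let φ : (Fin D → ℝ) →ₗ[ℝ] ℝ :=
        (LinearMap.proj i).comp (((M j).subtype).comp
          ((LinearMap.proj j).comp (L.toLinearEquiv.toLinearMap)))
      have hφ : ∀ y, φ y = (((L y) j : ↥(M j)) : Fin n → ℝ) i := fun y => rfl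
      have hgoal : u (some (Sum.inr j)) (L x) i = φ x := rfl
      have hsum : eval x (ent (some (Sum.inr j)) i)
          = ∑ t, ((((L (Pi.single t 1)) j : ↥(M j)) : Fin n → ℝ) i) * x t := by
        simp [ent]
      rw [hsum, hgoal, φ.pi_apply_eq_sum_univ x]
      refine Finset.sum_congr rfl fun t _ => ?_
      have h3 : (fun j' => if t = j' then (1:ℝ) else 0) = Pi.single t 1 := by
        funext j'; simp [Pi.single_apply, eq_comm]
      rw [h3, hφ, smul_eq_mul, mul_comm]
  have hPeval : ∀ x, eval x P = F (L x) := by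
    intro x
    show (eval x : MvPolynomial (Fin D) ℝ →+* ℝ) _ = _
    rw [RingHom.map_det]
    congr 1
    ext a c
    simp only [RingHom.mapMatrix_apply, Matrix.map_apply, Matrix.of_apply, map_sum, _root_.map_mul, hent]
  have hP0 : P ≠ 0 := by
    intro hP
    apply hF₀
    have h4 := hPeval (L.symm v₀)
    rw [hP, map_zero] at h4
    rw [L.apply_symm_apply] at h4
    exact h4.symm
  -- conclude using uniqueness of Haar measure
  apply measure_mono_null hSsub
  have h1 := Measure.isAddLeftInvariant_eq_smul (Measure.pi ν) (volume.map ⇑L)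
  rw [h1]
  have h2 : (volume.map ⇑L) {v : (j : Fin k) → ↥(M j) | F v = 0} = 0 := by
    rw [Measure.map_apply L.continuous.measurable hZmeas]
    have h3 : ⇑L ⁻¹' {v : (j : Fin k) → ↥(M j) | F v = 0} = {x | eval x P = 0} := by
      ext x
      simp only [Set.mem_preimage, Set.mem_setOf_eq, hPeval]
    rw [h3]
    exact mvpoly_null D P hP0
  simp [h2]
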